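/- Let N(E) = #{(n,k) ∈ ℕ×(ℤ∖{0}) : 4n|k| ≤ E}. Then, as E → +∞, N(E) = (E/2)·log E + O(E); in particular N(E)/(E·log E) → 1/2, i.e. the Weyl law for the Grushin cylinder has leading term (1/2)·E·log E. -/

import Mathlib

open Filter Real Asymptotics

/-- Divisor summatory function. -/
def grushinT (M : ℕ) : ℕ := ∑ n ∈ Finset.Icc 1 M, M / n

def grushinP (M : ℕ) : Finset (ℕ × ℕ) :=
  (Finset.Icc 1 M ×ˢ Finset.Icc 1 M).filter fun p => p.1 * p.2 ≤ M

noncomputable def grushinQ (M : ℕ) : Finset (ℕ × ℤ) :=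
  (Finset.Icc 1 M ×ˢ Finset.Icc (-(M:ℤ)) (M:ℤ)).filter
    fun p => p.2 ≠ 0 ∧ p.1 * p.2.natAbs ≤ M

lemma mem_grushinQ {M : ℕ} {p : ℕ × ℤ} :
    p ∈ grushinQ M ↔ 0 < p.1 ∧ p.2 ≠ 0 ∧ p.1 * p.2.natAbs ≤ M := by
  obtain ⟨n, k⟩ := p
  simp only [grushinQ, Finset.mem_filter, Finset.mem_product, Finset.mem_Icc]
  constructor
  · rintro ⟨⟨⟨h1, -⟩, -⟩, hk, hle⟩
    exact ⟨h1, hk, hle⟩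
  · rintro ⟨h1, hk, hle⟩
    have hk1 : 1 ≤ k.natAbs := Int.natAbs_pos.mpr hk
    have hnM : n ≤ M := le_trans (Nat.le_mul_of_pos_right n hk1) hle
    have hkM : k.natAbs ≤ M := le_trans (Nat.le_mul_of_pos_left k.natAbs h1) hle
    refine ⟨⟨⟨h1, hnM⟩, ?_, ?_⟩, hk, hle⟩
    · omega
    · omega

lemma grushinP_card (M : ℕ) : (grushinP M).card = grushinT M := by
  have hP : grushinP M =
      (Finset.Icc 1 M).biUnion fun n => (Finset.Icc 1 (M / n)).image fun m => (n, m) := by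
    ext ⟨n, m⟩
    simp only [grushinP, Finset.mem_filter, Finset.mem_product, Finset.mem_Icc,
      Finset.mem_biUnion, Finset.mem_image, Prod.mk.injEq]
    constructor
    · rintro ⟨⟨⟨h1, h2⟩, ⟨h3, h4⟩⟩, h5⟩
      refine ⟨n, ⟨h1, h2⟩, m, ⟨h3, ?_⟩, rfl, rfl⟩
      exact Nat.le_div_iff_mul_le (by omega) |>.mpr (by rw [Nat.mul_comm]; exact h5)
    · rintro ⟨a, ha, b, hb, rfl, rfl⟩
      have hb2 := Nat.le_div_iff_mul_le (show 0 < a by omega) |>.mp hb.2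
      have := Nat.div_le_self M a
      rw [Nat.mul_comm] at hb2
      exact ⟨⟨⟨ha.1, ha.2⟩, ⟨hb.1, by omega⟩⟩, hb2⟩
  rw [hP, Finset.card_biUnion, grushinT]
  · refine Finset.sum_congr rfl fun n _ => ?_
    rw [Finset.card_image_of_injective _ (fun a b h => by simpa using h), Nat.card_Icc]
    simp
  · intro a _ b _ hab
    simp only [Finset.disjoint_left, Finset.mem_image, Prod.mk.injEq]
    rintro ⟨x, y⟩ ⟨u, -, hu⟩ ⟨v, -, hv⟩
    rw [Prod.mk.injEq] at hu hv
    exact hab (hu.1.trans hv.1.symm)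

lemma grushinQ_card (M : ℕ) : (grushinQ M).card = 2 * grushinT M := by
  rw [← grushinP_card]
  have : (grushinQ M).card = (grushinP M ×ˢ (Finset.univ : Finset Bool)).card := by
    refine Finset.card_nbij' (fun p => ((p.1, p.2.natAbs), decide (0 < p.2)))
      (fun q => (q.1.1, if q.2 then (q.1.2 : ℤ) else -(q.1.2 : ℤ))) ?_ ?_ ?_ ?_
    · rintro ⟨n, k⟩ hp
      rw [Finset.mem_coe, mem_grushinQ] at hp
      obtain ⟨h1, hk, hle⟩ := hp
      have hk1 : 0 < k.natAbs := Int.natAbs_pos.mpr hk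
      simp only [Finset.mem_coe, Finset.mem_product, Finset.mem_univ, and_true, grushinP,
        Finset.mem_filter, Finset.mem_Icc]
      have hnM : n ≤ M := le_trans (Nat.le_mul_of_pos_right n hk1) hle
      have hkM : k.natAbs ≤ M := le_trans (Nat.le_mul_of_pos_left k.natAbs h1) hle
      exact ⟨⟨⟨h1, hnM⟩, hk1, hkM⟩, hle⟩
    · rintro ⟨⟨n, m⟩, b⟩ hq
      simp only [Finset.mem_coe, Finset.mem_product, grushinP, Finset.mem_filter, Finset.mem_Icc] at hq
      obtain ⟨⟨⟨⟨h1, h2⟩, h3, h4⟩, h5⟩, -⟩ := hq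
      rw [Finset.mem_coe, mem_grushinQ]
      rcases b with _ | _ <;> simp <;> omega
    · rintro ⟨n, k⟩ hp
      rw [Finset.mem_coe, mem_grushinQ] at hp
      obtain ⟨-, hk, -⟩ := hp
      rcases lt_trichotomy k 0 with h | h | h
      · have hk2 : ((k.natAbs : ℤ)) = -k := by omega
        simp [not_lt.mpr h.le, hk2]
      · exact absurd h hk
      · have hk2 : ((k.natAbs : ℤ)) = k := by omega
        simp [h, hk2]
    · rintro ⟨⟨n, m⟩, b⟩ hq
      simp only [Finset.mem_coe, Finset.mem_product, grushinP, Finset.mem_filter, Finset.mem_Icc] at hq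
      obtain ⟨⟨⟨⟨h1, h2⟩, h3, h4⟩, h5⟩, -⟩ := hq
      rcases b with _ | _ <;> simp <;> omega
  rw [this, Finset.card_product, Finset.card_univ, Fintype.card_bool]
  ring

lemma grushin_set_eq (E : ℝ) :
    {p : ℕ × ℤ | 0 < p.1 ∧ p.2 ≠ 0 ∧ (4 * p.1 * |(p.2 : ℝ)| ≤ E)}
      = ↑(grushinQ ⌊E / 4⌋₊) := by
  ext ⟨n, k⟩
  simp only [Set.mem_setOf_eq, Finset.mem_coe, mem_grushinQ]
  refine and_congr_right fun h1 => and_congr_right fun hk => ?_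
  have habs : ((k.natAbs : ℝ)) = |(k : ℝ)| := by rw [Nat.cast_natAbs, Int.cast_abs]
  rcases le_or_gt 0 E with hE | hE
  · rw [Nat.le_floor_iff (by positivity : (0:ℝ) ≤ E / 4)]
    push_cast
    rw [habs]
    constructor <;> intro h <;> linarith
  · have hfl : ⌊E / 4⌋₊ = 0 := Nat.floor_of_nonpos (by linarith)
    rw [hfl]
    have hk1 : 1 ≤ k.natAbs := Int.natAbs_pos.mpr hk
    have : (1:ℝ) ≤ |(k:ℝ)| := by rw [← habs]; exact_mod_cast hk1
    have hn1 : (1:ℝ) ≤ n := by exact_mod_cast h1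
    have hpos : 0 < n * k.natAbs := Nat.mul_pos h1 hk1
    constructor
    · intro h
      exfalso; nlinarith
    · intro h
      omega

lemma grushinT_bound (M : ℕ) : |(grushinT M : ℝ) - (M:ℝ) * Real.log M| ≤ 2 * M := by
  set T : ℝ := ((grushinT M : ℕ) : ℝ) with hT
  have hharm : ((harmonic M : ℚ) : ℝ) = ∑ n ∈ Finset.Icc 1 M, ((n:ℝ))⁻¹ := by
    rw [harmonic_eq_sum_Icc]; push_cast; rfl
  have hsum : ∑ n ∈ Finset.Icc 1 M, (M:ℝ) / n = M * ((harmonic M : ℚ) : ℝ) := by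
    rw [hharm, Finset.mul_sum]
    exact Finset.sum_congr rfl fun n _ => (div_eq_mul_inv _ _)
  have hub : T ≤ (M:ℝ) * ((harmonic M : ℚ) : ℝ) := by
    rw [hT, ← hsum, grushinT]
    push_cast
    exact Finset.sum_le_sum fun n _ => Nat.cast_div_le
  have hlb : (M:ℝ) * ((harmonic M : ℚ) : ℝ) - M ≤ T := by
    rw [← hsum, hT, grushinT]
    push_cast
    have : ∀ n ∈ Finset.Icc 1 M, (M:ℝ) / n - 1 ≤ ((M / n : ℕ) : ℝ) := by
      intro n hn
      rw [Finset.mem_Icc] at hn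
      have hn0 : 0 < n := hn.1
      have hmod : M < M / n * n + n := by
        have h1 := Nat.div_add_mod M n
        have h2 := Nat.mod_lt M hn0
        have h3 : M / n * n = n * (M / n) := Nat.mul_comm _ _
        omega
      have : (M:ℝ) < (M / n : ℕ) * n + n := by exact_mod_cast hmod
      rw [div_sub_one (by positivity), div_le_iff₀ (by positivity : (0:ℝ) < n)]
      linarith
    calc ∑ n ∈ Finset.Icc 1 M, (M:ℝ) / n - M
        = ∑ n ∈ Finset.Icc 1 M, ((M:ℝ) / n - 1) := by
          rw [Finset.sum_sub_distrib, Finset.sum_const, Nat.card_Icc]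
          simp
      _ ≤ ∑ n ∈ Finset.Icc 1 M, ((M / n : ℕ) : ℝ) := Finset.sum_le_sum this
  have hharm_ub : ((harmonic M : ℚ) : ℝ) ≤ 1 + Real.log M := by
    rcases Nat.eq_zero_or_pos M with rfl | hM
    · simp [harmonic_zero]
    · exact_mod_cast harmonic_le_one_add_log M
  have hharm_lb : Real.log M ≤ ((harmonic M : ℚ) : ℝ) := by
    have h := log_add_one_le_harmonic M
    have h2 : Real.log M ≤ Real.log (M + 1) := by
      rcases Nat.eq_zero_or_pos M with rfl | hM
      · simp
      · exact Real.log_le_log (by positivity) (by linarith)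
    exact le_trans h2 (by exact_mod_cast h)
  rw [abs_le]
  constructor
  · nlinarith [Nat.cast_nonneg (α := ℝ) M]
  · nlinarith [Nat.cast_nonneg (α := ℝ) M]

/-- Weyl's law for the Grushin cylinder, leading term:
`N(E) = (E/2)·log E + O(E)` as `E → +∞`, and `N(E)/(E log E) → 1/2`. -/
theorem grushin_cylinder_weyl_leading_term
    (N : ℝ → ℝ)
    (hN : ∀ E : ℝ, N E =
      Set.ncard {p : ℕ × ℤ | 0 < p.1 ∧ p.2 ≠ 0 ∧ (4 * p.1 * |(p.2 : ℝ)| ≤ E)}) :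
    (fun E : ℝ => N E - E / 2 * Real.log E) =O[atTop] (fun E : ℝ => E) ∧
      Tendsto (fun E : ℝ => N E / (E * Real.log E)) atTop (nhds (1 / 2)) := by
  have hNval : ∀ E : ℝ, N E = 2 * (grushinT ⌊E / 4⌋₊ : ℝ) := by
    intro E
    rw [hN E, grushin_set_eq E, Set.ncard_coe_finset, grushinQ_card]
    push_cast
    ring
  have hO : (fun E : ℝ => N E - E / 2 * Real.log E) =O[atTop] (fun E : ℝ => E) := by
    rw [isBigO_iff]
    refine ⟨5, ?_⟩
    filter_upwards [eventually_ge_atTop (8:ℝ)] with E hE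
    set M := ⌊E / 4⌋₊ with hM
    set m := (M : ℝ) with hm
    have hm2 : m ≤ E / 4 := Nat.floor_le (by positivity)
    have hm1 : E / 4 - 1 < m := Nat.sub_one_lt_floor _
    have hm3 : E / 8 ≤ m := by linarith
    have hm0 : 0 < m := by linarith
    have hT := grushinT_bound M
    rw [abs_le] at hT
    have hlog_le : Real.log m ≤ Real.log E := Real.log_le_log hm0 (by linarith)
    have hlog8 : Real.log 8 ≤ 3 := by
      have h8 : (8:ℝ) = 2 ^ 3 := by norm_num
      rw [h8, Real.log_pow]
      have := Real.log_two_lt_d9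
      push_cast
      linarith
    have hlog_ge : Real.log E - Real.log 8 ≤ Real.log m := by
      have h1 : Real.log (E / 8) ≤ Real.log m := Real.log_le_log (by linarith) hm3
      rw [Real.log_div (by linarith) (by norm_num)] at h1
      exact h1
    have hlogE_nonneg : 0 ≤ Real.log E := Real.log_nonneg (by linarith)
    have hlogE_le : Real.log E ≤ E := by
      have := Real.log_le_sub_one_of_pos (show (0:ℝ) < E by linarith)
      linarith
    have hD1 : 0 ≤ Real.log E - Real.log m := by linarith
    have hD2 : Real.log E - Real.log m ≤ 3 := by linarith
    have hident : 2 * m * Real.log m - E / 2 * Real.log E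
        = (2 * m - E / 2) * Real.log E - 2 * m * (Real.log E - Real.log m) := by ring
    have hA : (2 * m - E / 2) * Real.log E ≤ 0 :=
      mul_nonpos_of_nonpos_of_nonneg (by linarith) hlogE_nonneg
    have hB : -(2 * E) ≤ (2 * m - E / 2) * Real.log E := by
      have h1 : (-2 : ℝ) ≤ 2 * m - E / 2 := by linarith
      have h2 := mul_le_mul_of_nonneg_right h1 hlogE_nonneg
      nlinarith
    have hC : 0 ≤ 2 * m * (Real.log E - Real.log m) := by positivity
    have hD : 2 * m * (Real.log E - Real.log m) ≤ 6 * m := by nlinarith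
    rw [hNval E, Real.norm_eq_abs, Real.norm_eq_abs, abs_of_nonneg (by linarith : (0:ℝ) ≤ E),
      abs_le]
    constructor <;> [skip; skip] <;>
      · simp only [← hM, ← hm] at hT ⊢
        linarith
  refine ⟨hO, ?_⟩
  have hlt : (fun E : ℝ => E) =o[atTop] fun E : ℝ => E * Real.log E := by
    apply isLittleO_of_tendsto'
    · filter_upwards [eventually_ge_atTop (2:ℝ)] with E hE h0
      exfalso
      have : 0 < E * Real.log E := mul_pos (by linarith) (Real.log_pos (by linarith))
      linarith
    · have heq : (fun E : ℝ => E / (E * Real.log E)) =ᶠ[atTop] fun E => (Real.log E)⁻¹ := by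
        filter_upwards [eventually_gt_atTop (0:ℝ)] with E hE
        rw [div_mul_eq_div_div, div_self (ne_of_gt hE), one_div]
      rw [tendsto_congr' heq]
      exact Real.tendsto_log_atTop.inv_tendsto_atTop
  have h2 : Tendsto (fun E : ℝ => (N E - E / 2 * Real.log E) / (E * Real.log E)) atTop
      (nhds 0) := (hO.trans_isLittleO hlt).tendsto_div_nhds_zero
  have h3 := h2.add (tendsto_const_nhds (x := (1/2 : ℝ)) (f := atTop))
  rw [zero_add] at h3
  refine h3.congr' ?_
  filter_upwards [eventually_ge_atTop (2:ℝ)] with E hE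
  have hne : E * Real.log E ≠ 0 :=
    ne_of_gt (mul_pos (by linarith) (Real.log_pos (by linarith)))
  have hlog0 : Real.log E ≠ 0 := ne_of_gt (Real.log_pos (by linarith))
  field_simp
  ring
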